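/- Let k ≥ 2, let E ⊂ ℕ be finite and nonempty with e₀ = min(E), let f : D → ℕ with E^k ⊆ D ⊂ ℕ^k be regressively regular over E, and let ρ : E^k → ℕ satisfy ρ(x) > min(x) for all x ∈ E^k_2. Set A = Δ[f]E^k_0 (a set of negative integers) and B = Δ[f]E^k_2 (a set of positive integers). Then A ∪ B has a nonempty subset whose elements sum to 0 if and only if there exist A' ⊆ A and B' ⊆ {y ∈ B : y < e₀ · k^k}, not both empty, such that the sum of the elements of A' plus the sum of the elements of B' equals 0. -/
import Mathlib


/-- The minimum coordinate of a tuple `x : Fin k → ℕ`. -/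
noncomputable def minT {k : ℕ} (x : Fin k → ℕ) : ℕ := sInf (Set.range x)

/-- The cube `E^k`, viewed as a set of `k`-tuples of naturals. -/
def cube (k : ℕ) (E : Finset ℕ) : Set (Fin k → ℕ) := {x | ∀ i, x i ∈ E}

/-- Two `k`-tuples of naturals are *order equivalent* if their coordinates compare
(`<` and `=`) in exactly the same positions. -/
def OrdEquiv {k : ℕ} (x y : Fin k → ℕ) : Prop :=
  ∀ i j : Fin k, (x i < x j ↔ y i < y j) ∧ (x i = x j ↔ y i = y j)

/-- `f` is regressively regular over `E`: for each order-type equivalence class of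
`k`-tuples of `E^k`, either `f` is constant on the class with value `< min E`, or
`f x ≥ min x` for every `x` of the class. -/
def RegressivelyRegular {k : ℕ} (f : (Fin k → ℕ) → ℕ) (E : Finset ℕ) : Prop :=
  ∀ x ∈ cube k E,
    (∀ y ∈ cube k E, OrdEquiv x y → f y = f x ∧ f y < sInf (E : Set ℕ)) ∨
    (∀ y ∈ cube k E, OrdEquiv x y → minT y ≤ f y)

/-- The block `E^k_0 = {x ∈ E^k : f(x) < min E}`. -/
noncomputable def Eblock0 (k : ℕ) (f : (Fin k → ℕ) → ℕ) (E : Finset ℕ) : Set (Fin k → ℕ) :=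
  {x ∈ cube k E | f x < sInf (E : Set ℕ)}

/-- The block `E^k_1 = {x ∈ E^k : min E ≤ f(x) < min x}`. -/
noncomputable def Eblock1 (k : ℕ) (f : (Fin k → ℕ) → ℕ) (E : Finset ℕ) : Set (Fin k → ℕ) :=
  {x ∈ cube k E | sInf (E : Set ℕ) ≤ f x ∧ f x < minT x}

/-- The block `E^k_2 = {x ∈ E^k : min x ≤ f(x)}`. -/
noncomputable def Eblock2 (k : ℕ) (f : (Fin k → ℕ) → ℕ) (E : Finset ℕ) : Set (Fin k → ℕ) :=
  {x ∈ cube k E | minT x ≤ f x}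

/-- The set of integers `Δ[f]E^k_0 = {f(x) − min E : x ∈ E^k_0}`. -/
noncomputable def Delta0 (k : ℕ) (f : (Fin k → ℕ) → ℕ) (E : Finset ℕ) : Set ℤ :=
  {z | ∃ x ∈ Eblock0 k f E, z = (f x : ℤ) - ((sInf (E : Set ℕ) : ℕ) : ℤ)}

/-- The set of integers `Δ[f]E^k_2 = {ρ(x) − min(x) : x ∈ E^k_2}`. -/
noncomputable def Delta2 (k : ℕ) (ρ : (Fin k → ℕ) → ℕ) (f : (Fin k → ℕ) → ℕ)
    (E : Finset ℕ) : Set ℤ :=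
  {z | ∃ x ∈ Eblock2 k f E, z = (ρ x : ℤ) - (minT x : ℤ)}


open Finset in
/-- rank of coordinate `i` among the distinct values of `x`. -/
noncomputable def rnk {k : ℕ} (x : Fin k → ℕ) (i : Fin k) : ℕ :=
  ((Finset.univ.image x).filter (fun v => v < x i)).card

lemma rnk_lt {k : ℕ} (hk : 0 < k) (x : Fin k → ℕ) (i : Fin k) : rnk x i < k := by
  classical
  have h1 : ((Finset.univ.image x).filter (fun v => v < x i)) ⊆
      (Finset.univ.image x).erase (x i) := by
    intro v hv
    simp only [Finset.mem_filter] at hv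
    exact Finset.mem_erase.mpr ⟨ne_of_lt hv.2, hv.1⟩
  have h2 : (Finset.univ.image x).card ≤ k := by
    have := Finset.card_image_le (s := (Finset.univ : Finset (Fin k))) (f := x)
    simpa using this
  have h3 : ((Finset.univ.image x).erase (x i)).card = (Finset.univ.image x).card - 1 :=
    Finset.card_erase_of_mem (Finset.mem_image_of_mem x (Finset.mem_univ i))
  have := Finset.card_le_card h1
  unfold rnk
  omega

lemma rnk_lt_iff {k : ℕ} (x : Fin k → ℕ) (i j : Fin k) :
    x i < x j ↔ rnk x i < rnk x j := by
  classical
  constructor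
  · intro h
    apply Finset.card_lt_card
    have hsub : ((Finset.univ.image x).filter (fun v => v < x i)) ⊆
        ((Finset.univ.image x).filter (fun v => v < x j)) := by
      intro v hv
      simp only [Finset.mem_filter] at hv ⊢
      exact ⟨hv.1, hv.2.trans h⟩
    refine (Finset.ssubset_iff_of_subset hsub).mpr ⟨x i, ?_, ?_⟩
    · simp only [Finset.mem_filter]
      exact ⟨Finset.mem_image_of_mem x (Finset.mem_univ i), h⟩
    · simp only [Finset.mem_filter]
      intro hc
      exact lt_irrefl _ hc.2
  · intro h
    by_contra hc
    push_neg at hc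
    have hsub : ((Finset.univ.image x).filter (fun v => v < x j)) ⊆
        ((Finset.univ.image x).filter (fun v => v < x i)) := by
      intro v hv
      simp only [Finset.mem_filter] at hv ⊢
      exact ⟨hv.1, lt_of_lt_of_le hv.2 hc⟩
    exact absurd (Finset.card_le_card hsub) (by simp only [rnk] at h; omega)

lemma rnk_eq_iff {k : ℕ} (x : Fin k → ℕ) (i j : Fin k) :
    x i = x j ↔ rnk x i = rnk x j := by
  constructor
  · intro h; unfold rnk; rw [h]
  · intro h
    rcases lt_trichotomy (x i) (x j) with hlt | heq | hgt
    · exact absurd ((rnk_lt_iff x i j).mp hlt) (by omega)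
    · exact heq
    · exact absurd ((rnk_lt_iff x j i).mp hgt) (by omega)

lemma ordEquiv_of_rnk_eq {k : ℕ} {x y : Fin k → ℕ} (h : ∀ i, rnk x i = rnk y i) :
    OrdEquiv x y := by
  intro i j
  constructor
  · rw [rnk_lt_iff x i j, rnk_lt_iff y i j, h i, h j]
  · rw [rnk_eq_iff x i j, rnk_eq_iff y i j, h i, h j]

lemma ordEquiv_refl {k : ℕ} (x : Fin k → ℕ) : OrdEquiv x x := fun _ _ => ⟨Iff.rfl, Iff.rfl⟩

lemma exists_rnk_zero {k : ℕ} (hk : 0 < k) (x : Fin k → ℕ) : ∃ i, rnk x i = 0 := by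
  classical
  obtain ⟨i, -, hi⟩ := Finset.exists_min_image (Finset.univ : Finset (Fin k)) x
    ⟨⟨0, hk⟩, Finset.mem_univ _⟩
  refine ⟨i, ?_⟩
  unfold rnk
  rw [Finset.card_eq_zero, Finset.filter_eq_empty_iff]
  intro v hv
  obtain ⟨j, -, rfl⟩ := Finset.mem_image.mp hv
  exact not_lt.mpr (hi j (Finset.mem_univ j))

lemma sInf_le_minT {k : ℕ} (hk : 0 < k) {E : Finset ℕ} {x : Fin k → ℕ}
    (hx : x ∈ cube k E) : sInf (E : Set ℕ) ≤ minT x := by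
  have hne : (Set.range x).Nonempty := ⟨x ⟨0, hk⟩, Set.mem_range_self _⟩
  obtain ⟨i, hi⟩ := Nat.sInf_mem hne
  have : x i ∈ (E : Set ℕ) := hx i
  calc sInf (E : Set ℕ) ≤ x i := Nat.sInf_le this
    _ = minT x := hi

lemma f_const_of_rnk_eq {k : ℕ} (hk : 0 < k) {f : (Fin k → ℕ) → ℕ} {E : Finset ℕ}
    (hrr : RegressivelyRegular f E) {x y : Fin k → ℕ}
    (hx : x ∈ Eblock0 k f E) (hy : y ∈ Eblock0 k f E)
    (hr : ∀ i, rnk x i = rnk y i) : f x = f y := by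
  have hoe : OrdEquiv x y := ordEquiv_of_rnk_eq hr
  rcases hrr x hx.1 with h1 | h2
  · exact ((h1 y hy.1 hoe).1).symm
  · exfalso
    have h3 := h2 x hx.1 (ordEquiv_refl x)
    have h4 := sInf_le_minT hk hx.1
    have h5 := hx.2
    omega

/-- Any finset contained in `Delta0` has fewer than `k^k` elements. -/
lemma card_lt_of_subset_Delta0 {k : ℕ} (hk : 2 ≤ k) {f : (Fin k → ℕ) → ℕ} {E : Finset ℕ}
    (hrr : RegressivelyRegular f E) (A' : Finset ℤ) (hsub : ↑A' ⊆ Delta0 k f E) :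
    A'.card ≤ k ^ k - 1 := by
  classical
  have hk0 : 0 < k := by omega
  set c1 : Fin k → Fin k := fun _ => ⟨1, by omega⟩ with hc1
  set g : ℤ → (Fin k → Fin k) := fun a =>
    if h : ∃ x, x ∈ Eblock0 k f E ∧ a = (f x : ℤ) - ((sInf (E : Set ℕ) : ℕ) : ℤ) then
      fun i => ⟨rnk h.choose i, rnk_lt hk0 _ i⟩
    else c1 with hg
  have key : ∀ a ∈ A', ∃ x, x ∈ Eblock0 k f E ∧
      a = (f x : ℤ) - ((sInf (E : Set ℕ) : ℕ) : ℤ) ∧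
      g a = fun i => (⟨rnk x i, rnk_lt hk0 x i⟩ : Fin k) := by
    intro a ha
    have hmem : a ∈ Delta0 k f E := hsub ha
    obtain ⟨x, hx, hax⟩ := hmem
    have hex : ∃ x, x ∈ Eblock0 k f E ∧ a = (f x : ℤ) - ((sInf (E : Set ℕ) : ℕ) : ℤ) :=
      ⟨x, hx, hax⟩
    obtain ⟨hxc, haxc⟩ := hex.choose_spec
    refine ⟨hex.choose, hxc, haxc, ?_⟩
    simp only [hg, dif_pos hex]
  have hmaps : ∀ a ∈ A', g a ∈ (Finset.univ : Finset (Fin k → Fin k)).erase c1 := by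
    intro a ha
    obtain ⟨x, hx, hax, hgx⟩ := key a ha
    refine Finset.mem_erase.mpr ⟨?_, Finset.mem_univ _⟩
    obtain ⟨i, hi⟩ := exists_rnk_zero hk0 x
    intro hc
    have := congrFun hc i
    rw [hgx] at this
    simp only [hc1] at this
    have := congrArg Fin.val this
    simp [hi] at this
  have hinj : Set.InjOn g ↑A' := by
    intro a ha b hb hab
    obtain ⟨x, hx, hax, hgx⟩ := key a ha
    obtain ⟨y, hy, hby, hgy⟩ := key b hb
    have hr : ∀ i, rnk x i = rnk y i := by
      intro i
      rw [hgx, hgy] at hab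
      have := congrFun hab i
      exact congrArg Fin.val this
    have := f_const_of_rnk_eq hk0 hrr hx hy hr
    rw [hax, hby, this]
  have hcard := Finset.card_le_card_of_injOn g hmaps hinj
  rwa [Finset.card_erase_of_mem (Finset.mem_univ _), Finset.card_univ,
    Fintype.card_fun, Fintype.card_fin] at hcard

lemma Delta0_bounds {k : ℕ} {f : (Fin k → ℕ) → ℕ} {E : Finset ℕ} (hk : 0 < k)
    {a : ℤ} (ha : a ∈ Delta0 k f E) :
    -((sInf (E : Set ℕ) : ℕ) : ℤ) ≤ a ∧ a < 0 := by
  obtain ⟨x, hx, rfl⟩ := ha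
  have h1 := hx.2
  constructor
  · have : (0 : ℤ) ≤ (f x : ℤ) := Int.natCast_nonneg _
    omega
  · have : (f x : ℤ) < ((sInf (E : Set ℕ) : ℕ) : ℤ) := by exact_mod_cast h1
    omega

lemma Delta2_pos {k : ℕ} {ρ f : (Fin k → ℕ) → ℕ} {E : Finset ℕ}
    (hρ : ∀ x ∈ Eblock2 k f E, minT x < ρ x) {b : ℤ} (hb : b ∈ Delta2 k ρ f E) :
    0 < b := by
  obtain ⟨x, hx, rfl⟩ := hb
  have := hρ x hx
  have : (minT x : ℤ) < (ρ x : ℤ) := by exact_mod_cast this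
  omega

/-- with `A = Δ[f]E^k_0` and `B = Δ[f]E^k_2`, `A ∪ B` has a nonempty subset
summing to `0` iff there are `A' ⊆ A` and `B' ⊆ {y ∈ B : y < e₀·k^k}`, not both empty,
with `∑A' + ∑B' = 0`. -/
theorem zero_sum_iff_small (k : ℕ) (hk : 2 ≤ k) (E : Finset ℕ) (hE : E.Nonempty)
    (e₀ : ℕ) (he₀ : e₀ = sInf (E : Set ℕ))
    (D : Set (Fin k → ℕ)) (f : (Fin k → ℕ) → ℕ) (hED : cube k E ⊆ D)
    (hrr : RegressivelyRegular f E)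
    (ρ : (Fin k → ℕ) → ℕ) (hρ : ∀ x ∈ Eblock2 k f E, minT x < ρ x) :
    (∃ C : Finset ℤ, C.Nonempty ∧ ↑C ⊆ Delta0 k f E ∪ Delta2 k ρ f E ∧ ∑ c ∈ C, c = 0) ↔
    (∃ A' B' : Finset ℤ, ↑A' ⊆ Delta0 k f E ∧
      ↑B' ⊆ {y ∈ Delta2 k ρ f E | y < (e₀ : ℤ) * (k : ℤ) ^ k} ∧
      (A'.Nonempty ∨ B'.Nonempty) ∧ (∑ a ∈ A', a) + ∑ b ∈ B', b = 0) := by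
  classical
  subst he₀
  have hk0 : 0 < k := by omega
  set e₀ : ℕ := sInf (E : Set ℕ) with he
  constructor
  · rintro ⟨C, hCne, hCsub, hCsum⟩
    set A' : Finset ℤ := C.filter (fun c => c < 0) with hA'
    set B' : Finset ℤ := C.filter (fun c => ¬ c < 0) with hB'
    have hunion : A' ∪ B' = C := Finset.filter_union_filter_not_eq _ C
    have hsumsplit : (∑ a ∈ A', a) + ∑ b ∈ B', b = 0 := by
      rw [hA', hB', Finset.sum_filter_add_sum_filter_not]; exact hCsum
    have hA'sub : ↑A' ⊆ Delta0 k f E := by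
      intro a ha
      simp only [hA', Finset.coe_filter, Set.mem_setOf_eq] at ha
      rcases hCsub ha.1 with h | h
      · exact h
      · exact absurd (Delta2_pos hρ h) (by omega)
    have hB'sub : ↑B' ⊆ Delta2 k ρ f E := by
      intro b hb
      simp only [hB', Finset.coe_filter, Set.mem_setOf_eq] at hb
      rcases hCsub hb.1 with h | h
      · exact absurd (Delta0_bounds hk0 h).2 hb.2
      · exact h
    have hB'pos : ∀ b ∈ B', 0 < b := fun b hb => Delta2_pos hρ (hB'sub hb)
    rcases Finset.eq_empty_or_nonempty A' with hAe | hAne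
    · -- then B' sums to 0, but all elements positive, so B' empty, so C empty: contra
      exfalso
      rw [hAe, Finset.sum_empty, zero_add] at hsumsplit
      rcases Finset.eq_empty_or_nonempty B' with hBe | hBne
      · rw [hAe, hBe] at hunion
        simp at hunion
        exact hCne.ne_empty hunion.symm
      · exact absurd hsumsplit (ne_of_gt (Finset.sum_pos hB'pos hBne))
    · refine ⟨A', B', hA'sub, ?_, Or.inl hAne, hsumsplit⟩
      -- each b in B' is < e₀ * k^k
      obtain ⟨a₀, ha₀⟩ := hAne
      have he₀pos : 1 ≤ (e₀ : ℤ) := by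
        have := Delta0_bounds hk0 (hA'sub ha₀)
        omega
      have hcard := card_lt_of_subset_Delta0 hk hrr A' hA'sub
      have hkk : 1 ≤ k ^ k := Nat.one_le_pow k k hk0
      have hcardZ : (A'.card : ℤ) ≤ (k : ℤ) ^ k - 1 := by
        have : (A'.card : ℤ) ≤ ((k ^ k - 1 : ℕ) : ℤ) := by exact_mod_cast hcard
        push_cast [hkk] at this
        omega
      have hAlow : -((e₀ : ℤ) * ((k : ℤ) ^ k - 1)) ≤ ∑ a ∈ A', a := by
        have h1 : ∀ a ∈ A', -(e₀ : ℤ) ≤ a := fun a ha => (Delta0_bounds hk0 (hA'sub ha)).1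
        have h2 : A'.card • (-(e₀ : ℤ)) ≤ ∑ a ∈ A', a := Finset.card_nsmul_le_sum A' _ _ h1
        have h3 : A'.card • (-(e₀ : ℤ)) = -((A'.card : ℤ) * e₀) := by
          rw [nsmul_eq_mul]; ring
        rw [h3] at h2
        nlinarith
      have hBsum : ∑ b ∈ B', b ≤ (e₀ : ℤ) * ((k : ℤ) ^ k - 1) := by omega
      intro b hb
      refine ⟨hB'sub hb, ?_⟩
      have hble : b ≤ ∑ b ∈ B', b := by
        refine Finset.single_le_sum (fun c hc => le_of_lt (hB'pos c hc)) ?_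
        exact_mod_cast hb
      have hkpos : (0:ℤ) < (k:ℤ)^k := by positivity
      nlinarith
  · rintro ⟨A', B', hA'sub, hB'sub, hne, hsum⟩
    have hB'sub2 : ↑B' ⊆ Delta2 k ρ f E := fun b hb => (hB'sub hb).1
    have hdisj : Disjoint A' B' := by
      rw [Finset.disjoint_left]
      intro a haA haB
      have h1 := (Delta0_bounds hk0 (hA'sub haA)).2
      have h2 := Delta2_pos hρ (hB'sub2 haB)
      omega
    refine ⟨A' ∪ B', ?_, ?_, ?_⟩
    · rcases hne with h | h
      · exact h.mono Finset.subset_union_left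
      · exact h.mono Finset.subset_union_right
    · intro c hc
      rcases Finset.mem_union.mp (by exact_mod_cast hc) with h | h
      · exact Or.inl (hA'sub h)
      · exact Or.inr (hB'sub2 h)
    · rw [Finset.sum_union hdisj]; exact hsum
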